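/- Let G be a finite group of order n and S ⊆ G \ {1} a subset of cardinality s ≥ 1. Then there exist elements s_1, s_2, …, s_k ∈ S (repetitions allowed) with k ≤ ⌈n/s⌉ and s_1 s_2 ⋯ s_k = 1. -/

import Mathlib

/-- Image of a point under a relation. -/
def relImage {V : Type*} (E : V → V → Prop) (a : V) : Set V := {x | E a x}

/-- Image of a set under a relation. -/
def relSetImage {V : Type*} (E : V → V → Prop) (A : Set V) : Set V :=
  {y | ∃ x ∈ A, E x y}

/-- j-fold relational composition, with `relPow E 0` the identity relation. -/
def relPow {V : Type*} (E : V → V → Prop) : ℕ → V → V → Prop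
  | 0 => fun x y => x = y
  | (n+1) => fun x y => ∃ z, relPow E n x z ∧ E z y

/-- `f` is an automorphism of the relation `E`. -/
def IsRelAuto {V : Type*} (E : V → V → Prop) (f : V ≃ V) : Prop :=
  ∀ x y, E x y ↔ E (f x) (f y)

/-- The relation `E` is point-symmetric (vertex-transitive). -/
def PointSym {V : Type*} (E : V → V → Prop) : Prop :=
  ∀ x y : V, ∃ f : V ≃ V, IsRelAuto E f ∧ f x = y

/-- Boundary of a set: `∂(X) = Γ(X) \ X`. -/
def relBd {V : Type*} (E : V → V → Prop) (X : Set V) : Set V :=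
  relSetImage E X \ X

/-- Admissible sets for the definition of connectivity. -/
def relAdm {V : Type*} (E : V → V → Prop) (X : Set V) : Prop :=
  X.Finite ∧ X.Nonempty ∧ relSetImage E X ≠ Set.univ

/-- Connectivity: minimum boundary size over admissible sets. -/
noncomputable def relKappa {V : Type*} (E : V → V → Prop) : ℕ :=
  sInf {n | ∃ X : Set V, relAdm E X ∧ (relBd E X).ncard = n}

/-- A fragment achieves the connectivity. -/
def IsFragment {V : Type*} (E : V → V → Prop) (X : Set V) : Prop :=
  relAdm E X ∧ (relBd E X).ncard = relKappa E

/-- Cardinality of an atom. -/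
noncomputable def atomCard {V : Type*} (E : V → V → Prop) : ℕ :=
  sInf {n | ∃ X : Set V, IsFragment E X ∧ X.ncard = n}

/-- An atom: a fragment of minimum cardinality. -/
def IsRelAtom {V : Type*} (E : V → V → Prop) (A : Set V) : Prop :=
  IsFragment E A ∧ A.ncard = atomCard E

/-- `E` has a directed cycle of length `k`: `k` distinct vertices cyclically joined. -/
def HasCycle {V : Type*} (E : V → V → Prop) (k : ℕ) : Prop :=
  ∃ (a : V) (l : List V), (a :: l).length = k ∧ (a :: l).Nodup ∧
    List.Chain E a (l ++ [a])

open Pointwise Finset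

namespace Stmt6Aux

variable {G : Type*} [Group G] [Fintype G] [DecidableEq G]

def bd (S X : Finset G) : Finset G := (X * S) \ X

def adm (S X : Finset G) : Prop := X.Nonempty ∧ X ∪ X * S ≠ Finset.univ

noncomputable def kap (S : Finset G) : ℕ := sInf {c | ∃ X, adm S X ∧ (bd S X).card = c}

noncomputable def mm (S : Finset G) : ℕ :=
  sInf {c | ∃ X, adm S X ∧ (bd S X).card = kap S ∧ X.card = c}

lemma kap_le {S X : Finset G} (h : adm S X) : kap S ≤ (bd S X).card :=
  Nat.sInf_le ⟨X, h, rfl⟩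

lemma exists_kap {S : Finset G} (h : ∃ X, adm S X) :
    ∃ X, adm S X ∧ (bd S X).card = kap S := by
  obtain ⟨X, hX⟩ := h
  obtain ⟨Y, hY, hc⟩ : kap S ∈ {c | ∃ X, adm S X ∧ (bd S X).card = c} :=
    Nat.sInf_mem ⟨(bd S X).card, X, hX, rfl⟩
  exact ⟨Y, hY, hc⟩

lemma mm_le {S X : Finset G} (h : adm S X) (hb : (bd S X).card = kap S) : mm S ≤ X.card :=
  Nat.sInf_le ⟨X, h, hb, rfl⟩

lemma exists_atom {S : Finset G} (h : ∃ X, adm S X) :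
    ∃ A, adm S A ∧ (bd S A).card = kap S ∧ A.card = mm S := by
  obtain ⟨X, hX, hb⟩ := exists_kap h
  obtain ⟨A, h1, h2, h3⟩ : mm S ∈ {c | ∃ X, adm S X ∧ (bd S X).card = kap S ∧ X.card = c} :=
    Nat.sInf_mem ⟨X.card, X, hX, hb, rfl⟩
  exact ⟨A, h1, h2, h3⟩

lemma smul_univ_iff {g : G} {X : Finset G} : g • X = Finset.univ ↔ X = Finset.univ := by
  constructor
  · intro h
    apply Finset.eq_univ_of_card
    have h2 := Finset.card_smul_finset g X
    rw [h, Finset.card_univ] at h2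
    exact h2.symm
  · rintro rfl
    exact Finset.eq_univ_of_card _ (by rw [Finset.card_smul_finset, Finset.card_univ])

lemma adm_smul {S X : Finset G} (g : G) (h : adm S X) : adm S (g • X) := by
  obtain ⟨h1, h2⟩ := h
  refine ⟨h1.smul_finset, ?_⟩
  intro hu
  rw [smul_mul_assoc, ← Finset.smul_finset_union] at hu
  exact h2 (smul_univ_iff.mp hu)

lemma bd_smul (S X : Finset G) (g : G) : bd S (g • X) = g • bd S X := by
  rw [bd, bd, smul_mul_assoc, Finset.smul_finset_sdiff]

lemma submod (S X Y : Finset G) :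
    (bd S (X ∩ Y)).card + (bd S (X ∪ Y)).card ≤ (bd S X).card + (bd S Y).card := by
  have h1 : bd S (X ∩ Y) ∪ bd S (X ∪ Y) ⊆ bd S X ∪ bd S Y := by
    intro g hg
    rcases Finset.mem_union.1 hg with hg | hg
    · rcases Finset.mem_sdiff.1 hg with ⟨hm, hn⟩
      have hX : g ∈ X * S := Finset.mul_subset_mul_right Finset.inter_subset_left hm
      have hY : g ∈ Y * S := Finset.mul_subset_mul_right Finset.inter_subset_right hm
      by_cases hx : g ∈ X
      · have hy : g ∉ Y := fun hy => hn (Finset.mem_inter.2 ⟨hx, hy⟩)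
        exact Finset.mem_union_right _ (Finset.mem_sdiff.2 ⟨hY, hy⟩)
      · exact Finset.mem_union_left _ (Finset.mem_sdiff.2 ⟨hX, hx⟩)
    · rcases Finset.mem_sdiff.1 hg with ⟨hm, hn⟩
      rw [Finset.union_mul, Finset.mem_union] at hm
      rw [Finset.mem_union] at hn
      push_neg at hn
      rcases hm with hm | hm
      · exact Finset.mem_union_left _ (Finset.mem_sdiff.2 ⟨hm, hn.1⟩)
      · exact Finset.mem_union_right _ (Finset.mem_sdiff.2 ⟨hm, hn.2⟩)
  have h2 : bd S (X ∩ Y) ∩ bd S (X ∪ Y) ⊆ bd S X ∩ bd S Y := by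
    intro g hg
    rcases Finset.mem_inter.1 hg with ⟨hg1, hg2⟩
    rcases Finset.mem_sdiff.1 hg1 with ⟨hm1, _⟩
    rcases Finset.mem_sdiff.1 hg2 with ⟨_, hn2⟩
    rw [Finset.mem_union] at hn2; push_neg at hn2
    have hX : g ∈ X * S := Finset.mul_subset_mul_right Finset.inter_subset_left hm1
    have hY : g ∈ Y * S := Finset.mul_subset_mul_right Finset.inter_subset_right hm1
    exact Finset.mem_inter.2 ⟨Finset.mem_sdiff.2 ⟨hX, hn2.1⟩, Finset.mem_sdiff.2 ⟨hY, hn2.2⟩⟩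
  calc (bd S (X ∩ Y)).card + (bd S (X ∪ Y)).card
      = (bd S (X ∩ Y) ∪ bd S (X ∪ Y)).card + (bd S (X ∩ Y) ∩ bd S (X ∪ Y)).card :=
        (Finset.card_union_add_card_inter _ _).symm
    _ ≤ (bd S X ∪ bd S Y).card + (bd S X ∩ bd S Y).card :=
        Nat.add_le_add (Finset.card_le_card h1) (Finset.card_le_card h2)
    _ = (bd S X).card + (bd S Y).card := Finset.card_union_add_card_inter _ _



/-- complement of the closed out-neighbourhood -/
def compl' (S X : Finset G) : Finset G := Finset.univ \ (X ∪ X * S)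

lemma compl'_adm {S X : Finset G} (h : adm S X) :
    adm S⁻¹ (compl' S X) ∧ bd S⁻¹ (compl' S X) ⊆ bd S X := by
  obtain ⟨h1, h2⟩ := h
  have hne : (compl' S X).Nonempty := by
    rw [compl', Finset.sdiff_nonempty]
    intro hsub
    exact h2 (Finset.univ_subset_iff.mp hsub)
  -- key: (compl' S X) * S⁻¹ is disjoint from X
  have hdisj : ∀ y ∈ compl' S X * S⁻¹, y ∉ X := by
    intro y hy hyX
    rw [Finset.mem_mul] at hy
    obtain ⟨z, hz, w, hw, hzw⟩ := hy
    rw [Finset.mem_inv] at hw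
    obtain ⟨s, hs, rfl⟩ := hw
    have : z = y * s := by rw [← hzw]; group
    have hzX : z ∈ X * S := by
      rw [this]; exact Finset.mul_mem_mul hyX hs
    rw [compl', Finset.mem_sdiff] at hz
    exact hz.2 (Finset.mem_union_right _ hzX)
  constructor
  · refine ⟨hne, ?_⟩
    intro hu
    obtain ⟨x, hx⟩ := h1
    have : x ∈ compl' S X ∪ compl' S X * S⁻¹ := hu ▸ Finset.mem_univ x
    rcases Finset.mem_union.1 this with hc | hc
    · rw [compl', Finset.mem_sdiff] at hc
      exact hc.2 (Finset.mem_union_left _ hx)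
    · exact hdisj x hc hx
  · intro y hy
    rw [bd, Finset.mem_sdiff] at hy
    obtain ⟨hy1, hy2⟩ := hy
    have hyX : y ∉ X := hdisj y hy1
    have : y ∈ X ∪ X * S := by
      by_contra hc
      exact hy2 (by rw [compl', Finset.mem_sdiff]; exact ⟨Finset.mem_univ y, hc⟩)
    rcases Finset.mem_union.1 this with hc | hc
    · exact absurd hc hyX
    · exact Finset.mem_sdiff.2 ⟨hc, hyX⟩

lemma kap_inv_le (S : Finset G) (h : ∃ X, adm S X) : kap S⁻¹ ≤ kap S := by
  obtain ⟨X, hX, hb⟩ := exists_kap h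
  obtain ⟨hadm, hsub⟩ := compl'_adm hX
  calc kap S⁻¹ ≤ (bd S⁻¹ (compl' S X)).card := kap_le hadm
    _ ≤ (bd S X).card := Finset.card_le_card hsub
    _ = kap S := hb

/-- a set closed under left multiplication by a "subgroup finset" has divisible cardinality -/
lemma subgroup_dvd {A : Finset G} (h1 : (1:G) ∈ A) (hmul : A * A ⊆ A)
    (hinv : ∀ a ∈ A, a⁻¹ ∈ A) :
    ∀ C : Finset G, A * C ⊆ C → A.card ∣ C.card := by
  intro C
  induction C using Finset.strongInduction with
  | _ C ih =>
    intro hC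
    rcases C.eq_empty_or_nonempty with rfl | ⟨x, hx⟩
    · simp
    · have hAx : A * {x} ⊆ C := fun y hy => hC (Finset.mul_subset_mul_left (Finset.singleton_subset_iff.2 hx) hy)
      have himg : A * {x} = A.image (fun a => a * x) := by
        ext y
        rw [Finset.mem_mul, Finset.mem_image]
        constructor
        · rintro ⟨a, ha, z, hz, rfl⟩
          rw [Finset.mem_singleton] at hz
          exact ⟨a, ha, by rw [hz]⟩
        · rintro ⟨a, ha, rfl⟩
          exact ⟨a, ha, x, Finset.mem_singleton_self x, rfl⟩
      have hcardAx : (A * {x}).card = A.card := by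
        rw [himg, Finset.card_image_of_injective _ (mul_left_injective x)]
      have hAxne : (A * {x}).Nonempty :=
        ⟨x, Finset.mem_mul.2 ⟨1, h1, x, Finset.mem_singleton_self x, one_mul x⟩⟩
      have hss : C \ (A * {x}) ⊂ C := Finset.sdiff_ssubset hAx hAxne
      have hclosed : A * (C \ (A * {x})) ⊆ C \ (A * {x}) := by
        intro y hy
        rw [Finset.mem_mul] at hy
        obtain ⟨a, ha, c, hc, rfl⟩ := hy
        rw [Finset.mem_sdiff] at hc ⊢
        refine ⟨hC (Finset.mul_mem_mul ha hc.1), ?_⟩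
        intro hmem
        apply hc.2
        rw [Finset.mem_mul] at hmem
        obtain ⟨b, hb, z, hz, hbz⟩ := hmem
        rw [Finset.mem_singleton] at hz
        rw [hz] at hbz
        have hcval : c = (a⁻¹ * b) * x := by
          have h2 : a⁻¹ * (b * x) = c := by rw [hbz]; group
          rw [← h2]; group
        rw [hcval]
        exact Finset.mul_mem_mul (hmul (Finset.mul_mem_mul (hinv a ha) hb)) (Finset.mem_singleton_self x)
      have hsplit : (C \ (A * {x})).card + (A * {x}).card = C.card :=
        Finset.card_sdiff_add_card_eq_card hAx
      have hdvd := ih _ hss hclosed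
      rw [← hsplit, hcardAx]
      exact Nat.dvd_add hdvd dvd_rfl



lemma one_le_kap_aux {S X : Finset G} (hgen : Subgroup.closure (S : Set G) = ⊤)
    (h : adm S X) (hb : bd S X = ∅) : False := by
  have hXS : X * S ⊆ X := by
    intro y hy
    by_contra hc
    have : y ∈ bd S X := Finset.mem_sdiff.2 ⟨hy, hc⟩
    simp [hb] at this
  set K : Subgroup G :=
    { carrier := {g | X * {g} = X}
      one_mem' := by simp [Finset.singleton_one]
      mul_mem' := by
        intro a b ha hb'
        simp only [Set.mem_setOf_eq] at *
        rw [← Finset.singleton_mul_singleton, ← mul_assoc, ha, hb']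
      inv_mem' := by
        intro a ha
        simp only [Set.mem_setOf_eq] at *
        have : (X * {a}) * {a⁻¹} = X := by
          rw [mul_assoc, Finset.singleton_mul_singleton, mul_inv_cancel,
            Finset.singleton_one, mul_one]
        conv_rhs => rw [← this, ha] } with hK
  have hSK : (S : Set G) ⊆ K := by
    intro a ha
    simp only [Finset.mem_coe] at ha
    have hsub : X * {a} ⊆ X := fun y hy =>
      hXS (Finset.mul_subset_mul_left (Finset.singleton_subset_iff.2 ha) hy)
    have hcard : X.card ≤ (X * {a}).card := by
      have himg : X * {a} = X.image (fun x => x * a) := by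
        ext y
        rw [Finset.mem_mul, Finset.mem_image]
        constructor
        · rintro ⟨u, hu, z, hz, rfl⟩
          rw [Finset.mem_singleton] at hz
          exact ⟨u, hu, by rw [hz]⟩
        · rintro ⟨u, hu, rfl⟩
          exact ⟨u, hu, a, Finset.mem_singleton_self a, rfl⟩
      rw [himg, Finset.card_image_of_injective _ (mul_left_injective a)]
    exact Finset.eq_of_subset_of_card_le hsub hcard
  have hKtop : ∀ g : G, X * {g} = X := by
    intro g
    have : g ∈ K := by
      rw [← Subgroup.mem_carrier]
      have := (Subgroup.closure_le K).2 hSK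
      rw [hgen] at this
      exact this (Subgroup.mem_top g)
    exact this
  obtain ⟨x, hx⟩ := h.1
  have hXuniv : X = Finset.univ := by
    apply Finset.eq_univ_of_forall
    intro y
    have h2 : x * (x⁻¹ * y) ∈ X * {x⁻¹ * y} :=
      Finset.mul_mem_mul hx (Finset.mem_singleton_self (x⁻¹ * y))
    rw [hKtop (x⁻¹ * y), show x * (x⁻¹ * y) = y by group] at h2
    exact h2

  exact h.2 (by rw [hXuniv]; exact Finset.univ_subset_iff.mp Finset.subset_union_left)



lemma kap_inv_eq (S : Finset G) (hex : ∃ X, adm S X) (hex' : ∃ X, adm S⁻¹ X) :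
    kap S⁻¹ = kap S := by
  have h1 := kap_inv_le S hex
  have h2 := kap_inv_le S⁻¹ hex'
  rw [inv_inv] at h2
  exact le_antisymm h1 h2

lemma atoms_eq (S : Finset G) (hex : ∃ X, adm S X) (hex' : ∃ X, adm S⁻¹ X)
    (hm : mm S ≤ mm S⁻¹) {A B : Finset G}
    (hA : adm S A) (hbA : (bd S A).card = kap S) (hcA : A.card = mm S)
    (hB : adm S B) (hbB : (bd S B).card = kap S) (hcB : B.card = mm S)
    (hAB : (A ∩ B).Nonempty) : A = B := by
  by_contra hne
  -- A ∩ B is strictly smaller than the atoms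
  have hXlt : (A ∩ B).card < mm S := by
    rcases lt_or_ge (A ∩ B).card (mm S) with h | h
    · exact h
    · exfalso
      have h1 : A ∩ B = A := Finset.eq_of_subset_of_card_le Finset.inter_subset_left (hcA ▸ h)
      have h2 : A ⊆ B := by rw [← h1]; exact Finset.inter_subset_right
      exact hne (Finset.eq_of_subset_of_card_le h2 (hcA ▸ hcB.symm ▸ le_refl _))
  have hXadm : adm S (A ∩ B) := by
    refine ⟨hAB, ?_⟩
    intro hu
    apply hA.2
    apply Finset.univ_subset_iff.mp
    rw [← hu]
    exact Finset.union_subset_union Finset.inter_subset_left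
      (Finset.mul_subset_mul_right Finset.inter_subset_left)
  have hbX : kap S + 1 ≤ (bd S (A ∩ B)).card := by
    rcases Nat.lt_or_ge (kap S) ((bd S (A ∩ B)).card) with h | h
    · exact h
    · exfalso
      have heq : (bd S (A ∩ B)).card = kap S := le_antisymm h (kap_le hXadm)
      have := mm_le hXadm heq
      omega
  have hsub := submod S A B
  rw [hbA, hbB] at hsub
  have hbY : (bd S (A ∪ B)).card + 1 ≤ kap S := by omega
  have hYuniv : (A ∪ B) ∪ (A ∪ B) * S = Finset.univ := by
    by_contra hc
    have : adm S (A ∪ B) := ⟨hAB.mono (Finset.inter_subset_left.trans Finset.subset_union_left), hc⟩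
    have := kap_le this
    omega
  -- counting, upper bound for n
  have hcount1 : ∀ Z : Finset G, (Z ∪ Z * S).card = Z.card + (bd S Z).card := by
    intro Z
    rw [bd, ← Finset.union_sdiff_self_eq_union]
    exact Finset.card_union_of_disjoint Finset.disjoint_sdiff
  have hn1 : Fintype.card G + 1 ≤ (A ∪ B).card + kap S := by
    have : (Finset.univ : Finset G).card = (A ∪ B).card + (bd S (A ∪ B)).card := by
      rw [← hYuniv, hcount1]
    rw [Finset.card_univ] at this
    omega
  have hcards : (A ∪ B).card + (A ∩ B).card = mm S + mm S := by
    rw [Finset.card_union_add_card_inter, hcA, hcB]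
  have hX1 : 1 ≤ (A ∩ B).card := Finset.card_pos.mpr hAB
  have hupper : Fintype.card G + 2 ≤ mm S + mm S + kap S := by omega
  -- lower bound for n via the complement fragment
  obtain ⟨hAcadm, hAcsub⟩ := compl'_adm hA
  have hkinv := kap_inv_eq S hex hex'
  have hAcb : (bd S⁻¹ (compl' S A)).card = kap S⁻¹ := by
    apply le_antisymm
    · rw [hkinv]; rw [← hbA]; exact Finset.card_le_card hAcsub
    · exact kap_le hAcadm
  have hAcm : mm S⁻¹ ≤ (compl' S A).card := mm_le hAcadm hAcb
  have hn2 : Fintype.card G = mm S + kap S + (compl' S A).card := by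
    have hsplit : (Finset.univ \ (A ∪ A * S)).card + (A ∪ A * S).card = (Finset.univ : Finset G).card :=
      Finset.card_sdiff_add_card_eq_card (Finset.subset_univ _)
    rw [Finset.card_univ] at hsplit
    rw [hcount1 A, hcA, hbA] at hsplit
    rw [compl']
    omega
  omega

lemma atom_subgroup (S : Finset G) (hex : ∃ X, adm S X) (hex' : ∃ X, adm S⁻¹ X)
    (hm : mm S ≤ mm S⁻¹) :
    ∃ A : Finset G, adm S A ∧ (bd S A).card = kap S ∧ A.card = mm S ∧
      (1 : G) ∈ A ∧ A * A ⊆ A ∧ (∀ a ∈ A, a⁻¹ ∈ A) := by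
  obtain ⟨A₀, hA₀, hb₀, hc₀⟩ := exists_atom hex
  obtain ⟨a₀, ha₀⟩ := hA₀.1
  set A := a₀⁻¹ • A₀ with hAdef
  have hadm : adm S A := adm_smul a₀⁻¹ hA₀
  have hbc : (bd S A).card = kap S := by
    rw [hAdef, bd_smul, Finset.card_smul_finset, hb₀]
  have hcc : A.card = mm S := by rw [hAdef, Finset.card_smul_finset, hc₀]
  have h1A : (1 : G) ∈ A := by
    rw [hAdef, Finset.mem_smul_finset]
    exact ⟨a₀, ha₀, by simp⟩
  have hstab : ∀ a ∈ A, a • A = A := by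
    intro a ha
    apply atoms_eq S hex hex' hm (adm_smul a hadm) (by rw [bd_smul, Finset.card_smul_finset, hbc])
      (by rw [Finset.card_smul_finset, hcc]) hadm hbc hcc
    refine ⟨a, Finset.mem_inter.2 ⟨?_, ha⟩⟩
    rw [Finset.mem_smul_finset]
    exact ⟨1, h1A, by simp⟩
  refine ⟨A, hadm, hbc, hcc, h1A, ?_, ?_⟩
  · intro y hy
    rw [Finset.mem_mul] at hy
    obtain ⟨u, hu, v, hv, rfl⟩ := hy
    rw [← hstab u hu, Finset.mem_smul_finset]
    exact ⟨v, hv, rfl⟩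
  · intro a ha
    have : (1 : G) ∈ a • A := by rw [hstab a ha]; exact h1A
    rw [Finset.mem_smul_finset] at this
    obtain ⟨b, hb, hab⟩ := this
    have hba : b = a⁻¹ := by
      have h3 : a * b = 1 := hab
      calc b = a⁻¹ * (a * b) := by group
        _ = a⁻¹ := by rw [h3]; group
    rwa [← hba]

def noRel (S : Finset G) (k : ℕ) : Prop :=
  ∀ l : List G, (∀ x ∈ l, x ∈ S) → 1 ≤ l.length → l.length ≤ k → l.prod ≠ 1

def ball (S : Finset G) : ℕ → Finset G
  | 0 => {1}
  | (j+1) => ball S j ∪ ball S j * S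

lemma one_mem_ball (S : Finset G) : ∀ j, (1 : G) ∈ ball S j
  | 0 => Finset.mem_singleton_self 1
  | (j+1) => Finset.mem_union_left _ (one_mem_ball S j)

lemma ball_succ_subset (S : Finset G) (j : ℕ) : ball S j ⊆ ball S (j+1) :=
  Finset.subset_union_left

lemma ball_mono (S : Finset G) : ∀ {i j : ℕ}, i ≤ j → ball S i ⊆ ball S j := by
  intro i j h
  induction j with
  | zero => rw [Nat.le_zero.mp h]
  | succ j ih =>
    rcases Nat.lt_or_ge i (j+1) with h' | h'
    · exact (ih (Nat.lt_succ_iff.mp h')).trans (ball_succ_subset S j)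
    · rw [le_antisymm h h']

lemma mem_ball_prod (S : Finset G) :
    ∀ j, ∀ x ∈ ball S j, ∃ l : List G, (∀ y ∈ l, y ∈ S) ∧ l.length ≤ j ∧ l.prod = x := by
  intro j
  induction j with
  | zero =>
    intro x hx
    rw [ball, Finset.mem_singleton] at hx
    exact ⟨[], by simp, by simp, by simp [hx.symm]⟩
  | succ j ih =>
    intro x hx
    rcases Finset.mem_union.1 hx with hx | hx
    · obtain ⟨l, h1, h2, h3⟩ := ih x hx
      exact ⟨l, h1, h2.trans (Nat.le_succ j), h3⟩
    · rw [Finset.mem_mul] at hx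
      obtain ⟨y, hy, a, ha, rfl⟩ := hx
      obtain ⟨l, h1, h2, h3⟩ := ih y hy
      refine ⟨l ++ [a], ?_, ?_, ?_⟩
      · intro z hz
        rcases List.mem_append.1 hz with hz | hz
        · exact h1 z hz
        · rw [List.mem_singleton.1 hz]; exact ha
      · rw [List.length_append]; simpa using Nat.add_le_add h2 (le_refl 1)
      · rw [List.prod_append, h3]; simp

lemma ball_inv_not_mem {S : Finset G} {k : ℕ} (hno : noRel S k) (hk1 : 1 ≤ k) :
    ∀ j ≤ k - 1, ∀ x ∈ ball S j, x⁻¹ ∉ S := by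
  intro j hj x hx hinv
  obtain ⟨l, h1, h2, h3⟩ := mem_ball_prod S j x hx
  refine hno (l ++ [x⁻¹]) ?_ ?_ ?_ ?_
  · intro z hz
    rcases List.mem_append.1 hz with hz | hz
    · exact h1 z hz
    · rw [List.mem_singleton.1 hz]; exact hinv
  · rw [List.length_append]; simp
  · rw [List.length_append]
    have : j + 1 ≤ k := by omega
    simpa using le_trans (Nat.add_le_add h2 (le_refl 1)) this
  · rw [List.prod_append, h3]; simp

lemma ball_disjoint_inv {S : Finset G} {k : ℕ} (hno : noRel S k) (hk2 : 2 ≤ k) :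
    Disjoint (ball S (k-1)) S⁻¹ := by
  rw [Finset.disjoint_left]
  intro y hy hyinv
  rw [Finset.mem_inv] at hyinv
  obtain ⟨x, hx, rfl⟩ := hyinv
  exact ball_inv_not_mem hno (by omega) (k-1) (le_refl _) _ hy (by rwa [inv_inv])

lemma ball_growth {S : Finset G} {k : ℕ} (hno : noRel S k) (hk2 : 2 ≤ k) (hSne : S.Nonempty) :
    ∀ j ≤ k - 1, 1 + j * kap S ≤ (ball S j).card := by
  intro j
  induction j with
  | zero => intro _; simp [ball]
  | succ j ih =>
    intro hj
    have hj' : j ≤ k - 1 := by omega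
    have hadm : adm S (ball S j) := by
      refine ⟨⟨1, one_mem_ball S j⟩, ?_⟩
      intro hu
      obtain ⟨x, hx⟩ := hSne
      have hxmem : x⁻¹ ∈ ball S (k-1) := by
        apply ball_mono S (show j + 1 ≤ k - 1 from hj)
        rw [ball, hu]
        exact Finset.mem_univ _
      exact ball_inv_not_mem hno (by omega) (k-1) (le_refl _) _ hxmem (by rwa [inv_inv])
    have hcard : (ball S (j+1)).card = (ball S j).card + (bd S (ball S j)).card := by
      show (ball S j ∪ ball S j * S).card = _
      rw [bd, ← Finset.union_sdiff_self_eq_union]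
      exact Finset.card_union_of_disjoint Finset.disjoint_sdiff
    have := kap_le hadm
    have := ih hj'
    have hmul : (j+1) * kap S = j * kap S + kap S := by ring
    omega

lemma ball_estimate {S : Finset G} {k : ℕ} (hno : noRel S k) (hk2 : 2 ≤ k) (hSne : S.Nonempty) :
    1 + (k-1) * kap S + S.card ≤ Fintype.card G := by
  have h1 := ball_growth hno hk2 hSne (k-1) (le_refl _)
  have h2 : (ball S (k-1) ∪ S⁻¹).card = (ball S (k-1)).card + S⁻¹.card :=
    Finset.card_union_of_disjoint (ball_disjoint_inv hno hk2)
  have h3 : (ball S (k-1) ∪ S⁻¹).card ≤ Fintype.card G := by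
    rw [← Finset.card_univ]
    exact Finset.card_le_card (Finset.subset_univ _)
  rw [Finset.card_inv] at h2
  omega

universe u

lemma key {G : Type u} [Group G] [Fintype G] [DecidableEq G]
    (S : Finset G) (h1S : (1:G) ∉ S) (hSne : S.Nonempty)
    (hgen : Subgroup.closure (S : Set G) = ⊤)
    (hm : mm S ≤ mm S⁻¹)
    (k : ℕ) (hk : k = ⌈(Fintype.card G : ℚ) / (S.card : ℚ)⌉₊)
    (hno : noRel S k)
    (IH : ∀ (G' : Type u) [Group G'] [Fintype G'], Fintype.card G' < Fintype.card G →
      ∀ S' : Finset G', (1:G') ∉ S' → S'.Nonempty →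
      ∃ l : List G', (∀ x ∈ l, x ∈ S') ∧ 1 ≤ l.length ∧
        l.length ≤ ⌈(Fintype.card G' : ℚ) / (S'.card : ℚ)⌉₊ ∧ l.prod = 1) : False := by
  set n := Fintype.card G with hn
  set s := S.card with hs
  have hspos : 0 < s := Finset.card_pos.mpr hSne
  have hsn : s < n := by
    rw [hn, ← Finset.card_univ]
    apply Finset.card_lt_card
    rw [Finset.ssubset_univ_iff]
    intro h
    exact h1S (h ▸ Finset.mem_univ 1)
  have hks : n ≤ k * s := by
    have h1 : ((n : ℚ) / (s : ℚ)) ≤ (k : ℚ) := by rw [hk]; exact Nat.le_ceil _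
    have h2 : (n : ℚ) ≤ (k : ℚ) * (s : ℚ) := by
      rwa [div_le_iff₀ (by exact_mod_cast hspos)] at h1
    exact_mod_cast h2
  have hk2 : 2 ≤ k := by
    by_contra h
    push_neg at h
    interval_cases k <;> omega
  -- no element together with its inverse
  have hpair : ∀ x ∈ S, x⁻¹ ∉ S := by
    intro x hx hxi
    refine hno [x, x⁻¹] ?_ (by simp) (by simp; omega) (by simp)
    intro z hz
    rcases List.mem_cons.1 hz with rfl | hz
    · exact hx
    · rw [List.mem_singleton.1 hz]; exact hxi
  -- admissible sets exist for S and S⁻¹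
  obtain ⟨x₀, hx₀⟩ := id hSne
  have hexS : ∃ X, adm S X := by
    refine ⟨{1}, Finset.singleton_nonempty 1, ?_⟩
    intro hu
    have : x₀⁻¹ ∈ {1} ∪ {1} * S := hu ▸ Finset.mem_univ _
    rw [Finset.singleton_one, one_mul, Finset.mem_union] at this
    rw [show (1 : Finset G) = {1} from rfl, Finset.mem_singleton] at this
    rcases this with h | h
    · exact h1S (by rwa [inv_eq_one.mp h] at hx₀)
    · exact hpair x₀ hx₀ h
  have hexS' : ∃ X, adm S⁻¹ X := by
    refine ⟨{1}, Finset.singleton_nonempty 1, ?_⟩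
    intro hu
    have : x₀ ∈ {1} ∪ {1} * S⁻¹ := hu ▸ Finset.mem_univ _
    rw [Finset.singleton_one, one_mul, Finset.mem_union] at this
    rw [show (1 : Finset G) = {1} from rfl, Finset.mem_singleton] at this
    rcases this with h | h
    · exact h1S (h ▸ hx₀)
    · rw [Finset.mem_inv] at h
      obtain ⟨y, hy, hyx⟩ := h
      exact hpair y hy (by rwa [hyx])
  -- kappa is positive
  have hkpos : 1 ≤ kap S := by
    obtain ⟨X, hX, hb⟩ := exists_kap hexS
    rcases Nat.eq_zero_or_pos (kap S) with h0 | h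
    · exfalso
      rw [h0, Finset.card_eq_zero] at hb
      exact one_le_kap_aux hgen hX hb
    · exact h
  -- ball estimate
  have hball : 1 + (k-1) * kap S + s ≤ n := ball_estimate hno hk2 hSne
  -- kappa < s
  have hkaps : kap S + 1 ≤ s := by
    have h1 : (k-1) * kap S + 1 ≤ (k-1) * s := by
      have h9 : k = (k-1) + 1 := by omega
      have : k * s = (k-1) * s + s := by
        conv_lhs => rw [h9]
        ring
      omega
    have h2 : (k-1) * kap S < (k-1) * s := by omega
    have := Nat.lt_of_mul_lt_mul_left h2
    omega
  -- the atom
  obtain ⟨A, hAadm, hAb, hAc, h1A, hAmul, hAinv⟩ := atom_subgroup S hexS hexS' hm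
  set h := A.card with hh
  have hbdA : bd S A = A * (S \ A) := by
    ext y
    constructor
    · intro hy
      rw [bd, Finset.mem_sdiff] at hy
      obtain ⟨hy1, hy2⟩ := hy
      rw [Finset.mem_mul] at hy1
      obtain ⟨a, ha, x, hx, rfl⟩ := hy1
      have hxA : x ∉ A := by
        intro hxA
        exact hy2 (hAmul (Finset.mul_mem_mul ha hxA))
      exact Finset.mul_mem_mul ha (Finset.mem_sdiff.2 ⟨hx, hxA⟩)
    · intro hy
      rw [Finset.mem_mul] at hy
      obtain ⟨a, ha, x, hx, rfl⟩ := hy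
      rw [Finset.mem_sdiff] at hx
      rw [bd, Finset.mem_sdiff]
      constructor
      · exact Finset.mul_mem_mul ha hx.1
      · intro hmem
        apply hx.2
        have : x = a⁻¹ * (a * x) := by group
        rw [this]
        exact hAmul (Finset.mul_mem_mul (hAinv a ha) hmem)
  have hdvd1 : h ∣ kap S := by
    rw [← hAb, hbdA, hh]
    apply subgroup_dvd h1A hAmul hAinv
    intro y hy
    rw [← mul_assoc] at hy
    exact Finset.mul_subset_mul_right hAmul hy
  have hdvd2 : h ∣ n := by
    rw [hn, ← Finset.card_univ, hh]
    apply subgroup_dvd h1A hAmul hAinv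
    exact Finset.subset_univ _
  have hS''bd : S \ A ⊆ bd S A := by
    intro x hx
    rw [hbdA]
    have h2 : (1:G) * x ∈ A * (S \ A) := Finset.mul_mem_mul h1A hx
    rwa [one_mul] at h2
  set s' := (S ∩ A).card with hs'
  have hscard : s ≤ s' + kap S := by
    have hsplit : (S ∩ A).card + (S \ A).card = s := Finset.card_inter_add_card_sdiff S A
    have : (S \ A).card ≤ kap S := hAb ▸ Finset.card_le_card hS''bd
    omega
  have hs'pos : 0 < s' := by omega
  have h1SA : (1 : G) ∉ S ∩ A := fun hc => h1S (Finset.mem_inter.1 hc).1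
  -- subgroup structure on A
  set H : Subgroup G :=
    { carrier := (A : Set G)
      one_mem' := h1A
      mul_mem' := fun ha hb => hAmul (Finset.mul_mem_mul ha hb)
      inv_mem' := fun ha => hAinv _ ha } with hHdef
  have hmemH : ∀ x : G, x ∈ A ↔ x ∈ H := fun x => Iff.rfl
  letI : Fintype ↥H := Fintype.ofFinset A hmemH
  have hcardH : Fintype.card ↥H = h := by rw [hh]; exact Fintype.card_ofFinset A hmemH
  have hAne : A ≠ Finset.univ := by
    intro hAu
    exact hAadm.2 (by rw [hAu]; exact Finset.univ_subset_iff.mp Finset.subset_union_left)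
  have hHlt : Fintype.card ↥H < n := by
    rw [hcardH, hh, hn, ← Finset.card_univ]
    exact Finset.card_lt_card (Finset.ssubset_univ_iff.2 hAne)
  letI : DecidablePred (· ∈ H) := fun _ => Classical.propDecidable _
  set S'H : Finset ↥H := (S ∩ A).subtype (· ∈ H) with hS'H
  have hS'Hcard : S'H.card = s' := by
    rw [hS'H, Finset.card_subtype, Finset.filter_true_of_mem, hs']
    intro x hx
    exact (hmemH x).1 (Finset.mem_inter.1 hx).2
  have hS'Hne : S'H.Nonempty := Finset.card_pos.mp (by omega)
  have h1S'H : (1 : ↥H) ∉ S'H := by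
    intro hc
    rw [hS'H, Finset.mem_subtype] at hc
    exact h1SA (by exact_mod_cast hc)
  obtain ⟨l', hl'S, hl'len, hl'bound, hl'prod⟩ := IH ↥H hHlt S'H h1S'H hS'Hne
  set l := l'.map (H.subtype) with hldef
  have hlS : ∀ x ∈ l, x ∈ S := by
    intro x hx
    rw [hldef, List.mem_map] at hx
    obtain ⟨y, hy, rfl⟩ := hx
    have := hl'S y hy
    rw [hS'H, Finset.mem_subtype] at this
    exact (Finset.mem_inter.1 this).1
  have hlprod : l.prod = 1 := by
    rw [hldef, ← map_list_prod H.subtype l', hl'prod, map_one]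
  have hllen : l.length = l'.length := List.length_map _
  have hlk : ¬(l.length ≤ k) := by
    intro hlk
    exact hno l hlS (by omega) hlk hlprod
  have hceil : k + 1 ≤ ⌈(h : ℚ) / (s' : ℚ)⌉₊ := by
    have := hl'bound
    rw [hcardH, hS'Hcard] at this
    omega
  have hksA : k * s' + 1 ≤ h := by
    by_contra hc
    push_neg at hc
    have h1 : (h : ℚ) / (s' : ℚ) ≤ (k : ℚ) := by
      rw [div_le_iff₀ (by exact_mod_cast hs'pos)]
      exact_mod_cast Nat.lt_succ_iff.mp hc
    have := Nat.ceil_le.2 h1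
    omega
  -- final arithmetic
  obtain ⟨a, hna⟩ := hdvd2
  obtain ⟨b, hkb⟩ := hdvd1
  have hhpos : 0 < h := by
    rw [hh]
    exact Finset.card_pos.mpr ⟨1, h1A⟩
  -- n ≤ k * s ≤ k * s' + k * kap S ≤ (h - 1) + k * kap S
  have hup : n + 1 ≤ k * kap S + h := by
    have h1 : k * s ≤ k * s' + k * kap S := by
      calc k * s ≤ k * (s' + kap S) := Nat.mul_le_mul_left k hscard
        _ = k * s' + k * kap S := by ring
    omega
  -- so n ≤ k * kap S  (both divisible by h)
  have hle : n ≤ k * kap S := by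
    have h2 : h * a < h * (k * b + 1) := by
      have h5 : k * kap S = h * (k * b) := by rw [hkb]; ring
      have h6 : h * (k * b + 1) = h * (k * b) + h := by ring
      omega
    have h3 : a < k * b + 1 := Nat.lt_of_mul_lt_mul_left h2
    have h4 : a ≤ k * b := by omega
    calc n = h * a := hna
      _ ≤ h * (k * b) := Nat.mul_le_mul_left h h4
      _ = k * kap S := by rw [hkb]; ring
  -- but n ≥ k * kap S + 2
  have hlow : k * kap S + 2 ≤ n := by
    have h1 : (k-1) * kap S + kap S = k * kap S := by
      have h9 : k = (k-1) + 1 := by omega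
      conv_rhs => rw [h9]
      ring
    omega
  omega

lemma prod_inv_rev {G : Type*} [Group G] :
    ∀ l : List G, ((l.map (fun x => x⁻¹)).reverse).prod = l.prod⁻¹ := by
  intro l
  induction l with
  | nil => simp
  | cons x xs ih =>
    rw [List.map_cons, List.reverse_cons, List.prod_append, ih, List.prod_cons]
    simp [mul_inv_rev]

lemma main : ∀ N : ℕ, ∀ (G : Type u) [Group G] [Fintype G], Fintype.card G ≤ N →
    ∀ S : Finset G, (1:G) ∉ S → S.Nonempty →
    ∃ l : List G, (∀ x ∈ l, x ∈ S) ∧ 1 ≤ l.length ∧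
      l.length ≤ ⌈(Fintype.card G : ℚ) / (S.card : ℚ)⌉₊ ∧ l.prod = 1 := by
  intro N
  induction N with
  | zero =>
    intro G _ _ hcard
    exact absurd hcard (by have := Fintype.card_pos (α := G); omega)
  | succ N ih =>
    intro G _ _ hcard S h1S hSne
    letI := Classical.decEq G
    have hIH' : ∀ (G' : Type u) [Group G'] [Fintype G'], Fintype.card G' < Fintype.card G →
        ∀ S' : Finset G', (1:G') ∉ S' → S'.Nonempty →
        ∃ l : List G', (∀ x ∈ l, x ∈ S') ∧ 1 ≤ l.length ∧
          l.length ≤ ⌈(Fintype.card G' : ℚ) / (S'.card : ℚ)⌉₊ ∧ l.prod = 1 := by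
      intro G' _ _ hlt
      exact ih G' (by omega)
    by_cases hgen : Subgroup.closure (S : Set G) = ⊤
    · -- generated case: contradiction machinery
      by_contra hc
      set k := ⌈(Fintype.card G : ℚ) / (S.card : ℚ)⌉₊ with hk
      have hno : noRel S k := by
        intro l hl h1 h2 hprod
        exact hc ⟨l, hl, h1, h2, hprod⟩
      have hnoInv : noRel S⁻¹ k := by
        intro l hl h1 h2 hprod
        refine hno ((l.map (fun x => x⁻¹)).reverse) ?_ (by simpa using h1) (by simpa using h2) ?_
        · intro y hy
          rw [List.mem_reverse, List.mem_map] at hy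
          obtain ⟨x, hx, rfl⟩ := hy
          have := hl x hx
          rw [Finset.mem_inv] at this
          obtain ⟨z, hz, rfl⟩ := this
          rwa [inv_inv]
        · rw [prod_inv_rev, hprod, inv_one]
      have hkinv : k = ⌈(Fintype.card G : ℚ) / ((S⁻¹).card : ℚ)⌉₊ := by
        rw [Finset.card_inv]
      rcases le_or_gt (mm S) (mm S⁻¹) with hm | hm
      · exact key S h1S hSne hgen hm k hk hno hIH'
      · have h1S' : (1:G) ∉ S⁻¹ := by
          rw [Finset.mem_inv]
          rintro ⟨y, hy, hy1⟩
          exact h1S (by rwa [inv_eq_one.mp hy1] at hy)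
        have hgen' : Subgroup.closure ((S⁻¹ : Finset G) : Set G) = ⊤ := by
          rw [Finset.coe_inv, Subgroup.closure_inv]
          exact hgen
        have hm' : mm S⁻¹ ≤ mm S⁻¹⁻¹ := by rw [inv_inv]; exact le_of_lt hm
        exact key S⁻¹ h1S' (hSne.inv) hgen' hm' k hkinv hnoInv hIH'
    · -- not generated: recurse into the closure
      set K := Subgroup.closure (S : Set G) with hK
      letI : DecidablePred (· ∈ K) := fun _ => Classical.propDecidable _
      set A : Finset G := Finset.univ.filter (· ∈ K) with hA
      have hmemA : ∀ x : G, x ∈ A ↔ x ∈ K := by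
        intro x
        rw [hA, Finset.mem_filter]
        simp
      letI : Fintype ↥K := Fintype.ofFinset A hmemA
      have hcardK : Fintype.card ↥K = A.card := Fintype.card_ofFinset A hmemA
      have hAlt : Fintype.card ↥K < Fintype.card G := by
        rw [hcardK, ← Finset.card_univ]
        apply Finset.card_lt_card
        rw [Finset.ssubset_univ_iff]
        intro hAu
        apply hgen
        rw [Subgroup.eq_top_iff']
        intro x
        exact (hmemA x).1 (hAu ▸ Finset.mem_univ x)
      set SK : Finset ↥K := S.subtype (· ∈ K) with hSK
      have hSKcard : SK.card = S.card := by
        rw [hSK, Finset.card_subtype, Finset.filter_true_of_mem]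
        intro x hx
        exact Subgroup.subset_closure hx
      have h1SK : (1 : ↥K) ∉ SK := by
        intro hmem
        rw [hSK, Finset.mem_subtype] at hmem
        exact h1S (by exact_mod_cast hmem)
      have hSKne : SK.Nonempty := Finset.card_pos.mp (by rw [hSKcard]; exact Finset.card_pos.mpr hSne)
      obtain ⟨l', hl'S, hl'len, hl'bound, hl'prod⟩ :=
        ih ↥K (by omega) SK h1SK hSKne
      refine ⟨l'.map (K.subtype), ?_, ?_, ?_, ?_⟩
      · intro x hx
        rw [List.mem_map] at hx
        obtain ⟨y, hy, rfl⟩ := hx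
        have := hl'S y hy
        rw [hSK, Finset.mem_subtype] at this
        exact this
      · simpa using hl'len
      · rw [List.length_map]
        refine le_trans hl'bound (Nat.ceil_le_ceil ?_)
        rw [hSKcard]
        have hc1 : (Fintype.card ↥K : ℚ) ≤ (Fintype.card G : ℚ) := by
          exact_mod_cast le_of_lt hAlt
        gcongr
      · rw [← map_list_prod K.subtype l', hl'prod, map_one]

end Stmt6Aux

theorem stmt_6 {G : Type*} [Group G] [Fintype G] (n s : ℕ)
    (hn : Fintype.card G = n) (S : Finset G) (hS1 : (1 : G) ∉ S)
    (hs : S.card = s) (hs1 : 1 ≤ s) :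
    ∃ l : List G, (∀ x ∈ l, x ∈ S) ∧ 1 ≤ l.length ∧
      l.length ≤ ⌈(n : ℚ) / (s : ℚ)⌉₊ ∧ l.prod = 1 := by
  subst hn
  subst hs
  have hSne : S.Nonempty := Finset.card_pos.mp (by omega)
  exact Stmt6Aux.main (Fintype.card G) G (le_refl _) S hS1 hSne
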